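/- The function f(p₁, p₂) = log(1 + p₁h₁) + log(1 + p₂h₂/(p₁h₂ + 1)) with h₁ ≥ h₂ > 0, defined for p₁, p₂ ≥ 0, satisfies f(p₁,p₂) = log(1 + (p₁+p₂)h₂) + log((1+(p₁)h₁)/(1+p₁h₂)), and hence for fixed total power q = p₁ + p₂, f is nondecreasing in p₁. -/

import Mathlib

lemma noma_aux (h1 h2 : ℝ) (hh2 : 0 < h2) (hle : h2 ≤ h1)
    (p1 p2 : ℝ) (hp1 : 0 ≤ p1) (hp2 : 0 ≤ p2) :
    Real.log (1 + p1 * h1) + Real.log (1 + p2 * h2 / (p1 * h2 + 1))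
      = Real.log (1 + (p1 + p2) * h2)
        + Real.log ((1 + p1 * h1) / (1 + p1 * h2)) := by
  have hh1 : 0 < h1 := lt_of_lt_of_le hh2 hle
  have hd : 0 < p1 * h2 + 1 := by positivity
  have ha : (0:ℝ) < 1 + p1 * h1 := by positivity
  have hb : (0:ℝ) < 1 + p1 * h2 := by positivity
  have hc : (0:ℝ) < 1 + (p1 + p2) * h2 := by positivity
  have key : 1 + p2 * h2 / (p1 * h2 + 1) = (1 + (p1 + p2) * h2) / (1 + p1 * h2) := by
    field_simp
    ring
  rw [key, Real.log_div hc.ne' hb.ne', Real.log_div ha.ne' hb.ne']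
  ring

theorem noma_two_user_sum_rate_identity_and_monotone
    (h1 h2 : ℝ) (hh2 : 0 < h2) (hle : h2 ≤ h1) :
    (∀ p1 p2 : ℝ, 0 ≤ p1 → 0 ≤ p2 →
      Real.log (1 + p1 * h1) + Real.log (1 + p2 * h2 / (p1 * h2 + 1))
        = Real.log (1 + (p1 + p2) * h2)
          + Real.log ((1 + p1 * h1) / (1 + p1 * h2))) ∧
    (∀ q p1 p1' : ℝ, 0 ≤ p1 → p1 ≤ p1' → p1' ≤ q →
      Real.log (1 + p1 * h1) + Real.log (1 + (q - p1) * h2 / (p1 * h2 + 1))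
        ≤ Real.log (1 + p1' * h1)
          + Real.log (1 + (q - p1') * h2 / (p1' * h2 + 1))) := by
  refine ⟨noma_aux h1 h2 hh2 hle, ?_⟩
  intro q p1 p1' hp1 h12 h2q
  have hp1' : 0 ≤ p1' := hp1.trans h12
  have hq1 : 0 ≤ q - p1 := by linarith
  have hq1' : 0 ≤ q - p1' := by linarith
  have e1 := noma_aux h1 h2 hh2 hle p1 (q - p1) hp1 hq1
  have e2 := noma_aux h1 h2 hh2 hle p1' (q - p1') hp1' hq1'
  rw [show p1 + (q - p1) = q by ring] at e1
  rw [show p1' + (q - p1') = q by ring] at e2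
  rw [e1, e2]
  have hh1 : 0 < h1 := lt_of_lt_of_le hh2 hle
  have ha : (0:ℝ) < 1 + p1 * h1 := by positivity
  have hb : (0:ℝ) < 1 + p1 * h2 := by positivity
  have ha' : (0:ℝ) < 1 + p1' * h1 := by positivity
  have hb' : (0:ℝ) < 1 + p1' * h2 := by positivity
  have hmono : (1 + p1 * h1) / (1 + p1 * h2) ≤ (1 + p1' * h1) / (1 + p1' * h2) := by
    rw [div_le_div_iff₀ hb hb']
    nlinarith [mul_nonneg (sub_nonneg.2 h12) (sub_nonneg.2 hle)]
  exact add_le_add_right (Real.log_le_log (by positivity) hmono) _
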